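/- Let φ be a holomorphic self-map of the unit disc 𝔻 whose image φ(𝔻) is contained in a compact subset K of 𝔻 ∪ {finitely many boundary points}, specifically a closed polygon inscribed in the closed unit disc touching the circle only at its vertices, and suppose the composition operator C_φ is bounded on the weighted Dirichlet space D_α (0 < α ≤ 1), so that μ_{φ,α}(W(ξ,h)) = O(h^{2+α}) uniformly in ξ ∈ 𝕋 as h → 0, where μ_{φ,α}(Ω) = ∫_Ω N_{φ,α} dA. Then ∫_𝔻 |φ'(z)|²/(1-|φ(z)|²)² dA_α(z) < ∞. -/

import Mathlib

open Real Complex MeasureTheory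

lemma stmt15_re_lt {u x : ℂ} (hu : ‖u‖ ≤ 1) (hx : ‖x‖ = 1) (hne : u ≠ x) :
    (u * (starRingEnd ℂ) x).re < 1 := by
  have h1 := Complex.normSq_sub u x
  have h2 : 0 < Complex.normSq (u - x) := Complex.normSq_pos.2 (sub_ne_zero.2 hne)
  have h3 : Complex.normSq u = ‖u‖ ^ 2 := by
    rw [Complex.normSq_eq_norm_sq]
  have h4 : Complex.normSq x = ‖x‖ ^ 2 := by
    rw [Complex.normSq_eq_norm_sq]
  have hu0 : (0:ℝ) ≤ ‖u‖ := norm_nonneg _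
  nlinarith [h2, h1]

lemma stmt15_normSq_sub' (w v : ℂ) (hv : ‖v‖ = 1) :
    1 - (w * (starRingEnd ℂ) v).re = (1 - ‖w‖ ^ 2) / 2 + ‖w - v‖ ^ 2 / 2 := by
  have h1 := Complex.normSq_sub w v
  have h3 : Complex.normSq w = ‖w‖ ^ 2 := by
    rw [Complex.normSq_eq_norm_sq]
  have h4 : Complex.normSq v = ‖v‖ ^ 2 := by
    rw [Complex.normSq_eq_norm_sq]
  have h5 : Complex.normSq (w - v) = ‖w - v‖ ^ 2 := by
    rw [Complex.normSq_eq_norm_sq]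
  rw [hv] at h4
  nlinarith [h1]

lemma stmt15_arg_le {w v : ℂ} (hv : ‖v‖ = 1) (hwv : ‖w - v‖ ≤ 1 / π) :
    |Complex.arg (w * (starRingEnd ℂ) v)| ≤ π * ‖w - v‖ := by
  have hπ : (3:ℝ) < π := Real.pi_gt_three
  set u := w * (starRingEnd ℂ) v with hu
  have hnv : Complex.normSq v = 1 := by
    have : Complex.normSq v = ‖v‖ ^ 2 := by rw [Complex.normSq_eq_norm_sq]
    rw [this, hv]; norm_num
  have hu1 : u - 1 = (w - v) * (starRingEnd ℂ) v := by
    have : v * (starRingEnd ℂ) v = 1 := by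
      rw [Complex.mul_conj, hnv]; norm_num
    rw [hu, sub_mul, this]
  have hnu1 : ‖u - 1‖ = ‖w - v‖ := by
    rw [hu1, norm_mul, RCLike.norm_conj, hv, mul_one]
  have hnu : ‖u‖ = ‖w‖ := by
    rw [hu, norm_mul, RCLike.norm_conj, hv, mul_one]
  have hw2 : 1 - 1/π ≤ ‖w‖ := by
    have := norm_sub_norm_le v w
    have h2 : ‖v - w‖ = ‖w - v‖ := by rw [norm_sub_rev]
    rw [hv] at this; rw [h2] at this; linarith
  have hre : 1 - ‖w - v‖ ≤ u.re := by
    have h1 : (1 - u).re ≤ ‖1 - u‖ := Complex.re_le_norm (1 - u)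
    have h2 : ‖1 - u‖ = ‖u - 1‖ := norm_sub_rev _ _
    have h3 : (1 - u).re = 1 - u.re := by simp
    rw [h2, hnu1] at h1; rw [h3] at h1; linarith
  have hrepos : 0 < u.re := by
    have : 1/π < 1/3 := by
      apply one_div_lt_one_div_of_lt <;> linarith
    linarith
  have hu0 : u ≠ 0 := by
    intro h; rw [h] at hrepos; simp at hrepos
  have habs : 0 < ‖u‖ := norm_pos_iff.2 hu0
  have hcos : 0 < Real.cos (Complex.arg u) := by
    rw [Complex.cos_arg hu0]
    exact div_pos hrepos habs
  have harg1 : |Complex.arg u| < π / 2 := by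
    by_contra hc
    push_neg at hc
    have hle : Real.cos |Complex.arg u| ≤ 0 := by
      apply Real.cos_nonpos_of_pi_div_two_le_of_le hc
      have := Complex.abs_arg_le_pi u
      linarith
    have : Real.cos |Complex.arg u| = Real.cos (Complex.arg u) := by
      rcases abs_cases (Complex.arg u) with ⟨h, _⟩ | ⟨h, _⟩
      · rw [h]
      · rw [h, Real.cos_neg]
    linarith [this ▸ hle]
  have hsin : 2 / π * |Complex.arg u| ≤ Real.sin |Complex.arg u| :=
    Real.mul_le_sin (abs_nonneg _) harg1.le
  have habs_sin : Real.sin |Complex.arg u| = |Real.sin (Complex.arg u)| := by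
    rcases le_or_gt 0 (Complex.arg u) with h | h
    · rw [_root_.abs_of_nonneg h,
        _root_.abs_of_nonneg (Real.sin_nonneg_of_nonneg_of_le_pi h (Complex.arg_le_pi u))]
    · rw [_root_.abs_of_neg h, Real.sin_neg, _root_.abs_of_nonpos
        (Real.sin_nonpos_of_nonpos_of_neg_pi_le h.le (Complex.neg_pi_lt_arg u).le)]
  have hsineq : Real.sin |Complex.arg u| = |u.im| / ‖u‖ := by
    rw [habs_sin, Complex.sin_arg, abs_div, _root_.abs_of_pos habs]
  have him : |u.im| ≤ ‖w - v‖ := by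
    have h1 : |(u - 1).im| ≤ ‖u - 1‖ := Complex.abs_im_le_norm _
    have h2 : (u - 1).im = u.im := by simp
    rw [h2, hnu1] at h1
    exact h1
  have habs2 : (1:ℝ)/2 ≤ ‖u‖ := by
    rw [hnu]
    have h4 : 1/π < 1/3 := by apply one_div_lt_one_div_of_lt <;> linarith
    linarith
  -- combine
  have key : |Complex.arg u| ≤ π / 2 * (|u.im| / ‖u‖) := by
    rw [← hsineq]
    have hπpos : 0 < π := by linarith
    calc |Complex.arg u| = π / 2 * (2 / π * |Complex.arg u|) := by field_simp
    _ ≤ π / 2 * Real.sin |Complex.arg u| := by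
        apply mul_le_mul_of_nonneg_left hsin; positivity
  have : |u.im| / ‖u‖ ≤ 2 * ‖w - v‖ := by
    rw [div_le_iff₀ habs]
    calc |u.im| ≤ ‖w - v‖ := him
    _ ≤ 2 * ‖w - v‖ * (1/2) := by linarith [norm_nonneg (w - v)]
    _ ≤ 2 * ‖w - v‖ * ‖u‖ := by
        apply mul_le_mul_of_nonneg_left habs2
        positivity
  calc |Complex.arg u| ≤ π / 2 * (|u.im| / ‖u‖) := key
  _ ≤ π / 2 * (2 * ‖w - v‖) := by
      apply mul_le_mul_of_nonneg_left this; positivity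
  _ = π * ‖w - v‖ := by ring

lemma stmt15_cover (w : ℂ) (hw : w ≠ 0) :
    ∃ j : ℕ, j < 13 ∧
      |Complex.arg (w * (starRingEnd ℂ)
        (Complex.exp ((((-π + (j:ℝ)/2 : ℝ)) : ℂ) * Complex.I)))| ≤ 1/2 := by
  have hπ : (3:ℝ) < π := Real.pi_gt_three
  have hπ' : π < 3.15 := Real.pi_lt_d2
  set a := Complex.arg w with ha
  have ha1 : -π < a := Complex.neg_pi_lt_arg w
  have ha2 : a ≤ π := Complex.arg_le_pi w
  set j : ℕ := ⌊2 * (a + π)⌋₊ with hj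
  have hnn : 0 ≤ 2 * (a + π) := by linarith
  have hfl : (j:ℝ) ≤ 2 * (a + π) := Nat.floor_le hnn
  have hfl2 : 2 * (a + π) < (j:ℝ) + 1 := Nat.lt_floor_add_one _
  have hj13 : j < 13 := by
    have : (j:ℝ) < 13 := by linarith
    exact_mod_cast this
  refine ⟨j, hj13, ?_⟩
  set t : ℝ := -π + (j:ℝ)/2 with ht
  set s : ℝ := a - t with hs
  have hs0 : 0 ≤ s := by rw [hs, ht]; linarith
  have hs1 : s < 1/2 := by rw [hs, ht]; linarith
  -- compute the product
  have hconj : (starRingEnd ℂ) (Complex.exp ((t:ℂ) * Complex.I)) =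
      Complex.exp (-((t:ℂ) * Complex.I)) := by
    rw [← Complex.exp_conj]
    congr 1
    simp [map_mul, Complex.conj_ofReal, Complex.conj_I]
  have hwprod : w * (starRingEnd ℂ) (Complex.exp ((t:ℂ) * Complex.I)) =
      (‖w‖ : ℂ) * Complex.exp ((s:ℂ) * Complex.I) := by
    rw [hconj]
    conv_lhs => rw [← Complex.norm_mul_exp_arg_mul_I w]
    rw [mul_assoc, ← Complex.exp_add]
    congr 2
    rw [hs]
    push_cast
    ring
  have hargeq : Complex.arg ((‖w‖ : ℂ) * Complex.exp ((s:ℂ) * Complex.I)) = s := by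
    rw [Complex.arg_real_mul _ (norm_pos_iff.2 hw), Complex.exp_mul_I,
      Complex.arg_cos_add_sin_mul_I ⟨by linarith, by linarith⟩]
  have : ((-π + (j:ℝ)/2 : ℝ) : ℂ) = (t : ℂ) := by rw [ht]
  rw [this, hwprod, hargeq, _root_.abs_of_nonneg hs0]
  linarith

lemma stmt15_extreme (V : Finset ℂ) (hV : ∀ v ∈ V, ‖v‖ ≤ 1) {x : ℂ} (hx : ‖x‖ = 1)
    (hmem : x ∈ convexHull ℝ (V : Set ℂ)) : x ∈ V := by
  obtain ⟨w, hw0, hw1, hsum⟩ := Finset.mem_convexHull'.1 hmem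
  by_contra hxV
  have hlt : ∀ y ∈ V, (y * (starRingEnd ℂ) x).re < 1 := fun y hy =>
    stmt15_re_lt (hV y hy) hx (fun h => hxV (h ▸ hy))
  have hre : ((∑ y ∈ V, w y • y) * (starRingEnd ℂ) x).re
      = ∑ y ∈ V, w y * (y * (starRingEnd ℂ) x).re := by
    rw [Finset.sum_mul, Complex.re_sum]
    refine Finset.sum_congr rfl fun y _ => ?_
    rw [smul_mul_assoc, Complex.smul_re, smul_eq_mul]
  have hone : ((∑ y ∈ V, w y • y) * (starRingEnd ℂ) x).re = 1 := by
    rw [hsum, Complex.mul_conj]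
    have : Complex.normSq x = 1 := by
      rw [Complex.normSq_eq_norm_sq, hx]; norm_num
    rw [this]; simp
  have hex : ∃ y ∈ V, 0 < w y := by
    by_contra hco
    push_neg at hco
    have : ∑ y ∈ V, w y ≤ 0 := Finset.sum_nonpos hco
    linarith
  obtain ⟨y0, hy0, hwy0⟩ := hex
  have hstrict : ∑ y ∈ V, w y * (y * (starRingEnd ℂ) x).re < ∑ y ∈ V, w y := by
    apply Finset.sum_lt_sum
    · intro i hi
      have := (hlt i hi).le
      calc w i * (i * (starRingEnd ℂ) x).re ≤ w i * 1 :=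
        mul_le_mul_of_nonneg_left this (hw0 i hi)
      _ = w i := mul_one _
    · exact ⟨y0, hy0, by nlinarith [hlt y0 hy0]⟩
  rw [hre, hone] at *
  linarith [hone, hstrict, hw1, hre]

lemma stmt15_hull_ineq (V : Finset ℂ) (v : ℂ) (c : ℝ) (hc : 0 ≤ c)
    (hV : ∀ u ∈ V, c * ‖u - v‖ ≤ 1 - (u * (starRingEnd ℂ) v).re) :
    ∀ w ∈ convexHull ℝ (V : Set ℂ), c * ‖w - v‖ ≤ 1 - (w * (starRingEnd ℂ) v).re := by
  have hsub : convexHull ℝ (V : Set ℂ) ⊆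
      {w : ℂ | c * ‖w - v‖ + (w * (starRingEnd ℂ) v).re ≤ 1} := by
    apply convexHull_min
    · intro u hu
      have := hV u hu
      simp only [Set.mem_setOf_eq]
      linarith
    · intro x hx y hy a b ha hb hab
      simp only [Set.mem_setOf_eq] at hx hy ⊢
      have hcomb : a • x + b • y - v = a • (x - v) + b • (y - v) := by
        simp only [Complex.real_smul]
        have habC : (a:ℂ) + b = 1 := by exact_mod_cast hab
        linear_combination v * habC
      have hnorm : ‖a • x + b • y - v‖ ≤ a * ‖x - v‖ + b * ‖y - v‖ := by
        rw [hcomb]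
        calc ‖a • (x - v) + b • (y - v)‖ ≤ ‖a • (x - v)‖ + ‖b • (y - v)‖ := norm_add_le _ _
        _ = a * ‖x - v‖ + b * ‖y - v‖ := by
            rw [norm_smul, norm_smul, Real.norm_of_nonneg ha, Real.norm_of_nonneg hb]
      have hre : ((a • x + b • y) * (starRingEnd ℂ) v).re
          = a * (x * (starRingEnd ℂ) v).re + b * (y * (starRingEnd ℂ) v).re := by
        rw [add_mul, Complex.add_re, smul_mul_assoc, smul_mul_assoc,
          Complex.smul_re, Complex.smul_re, smul_eq_mul, smul_eq_mul]
      rw [hre]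
      nlinarith [mul_le_mul_of_nonneg_left hnorm hc, mul_le_mul_of_nonneg_left hx ha,
        mul_le_mul_of_nonneg_left hy hb]
  intro w hw
  have := hsub hw
  simp only [Set.mem_setOf_eq] at this
  linarith

lemma stmt15_c_exists (V : Finset ℂ) (hV : ∀ v ∈ V, ‖v‖ ≤ 1) :
    ∃ c : ℝ, 0 < c ∧ c ≤ 1 ∧ ∀ v ∈ V, ‖v‖ = 1 → ∀ u ∈ V,
      c * ‖u - v‖ ≤ 1 - (u * (starRingEnd ℂ) v).re := by
  classical
  set S := (V ×ˢ V).filter (fun p => ‖p.2‖ = 1 ∧ p.1 ≠ p.2) with hS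
  set f : ℂ × ℂ → ℝ := fun p => (1 - (p.1 * (starRingEnd ℂ) p.2).re) / ‖p.1 - p.2‖ with hf
  have hfpos : ∀ p ∈ S, 0 < f p := by
    intro p hp
    rw [hS, Finset.mem_filter] at hp
    obtain ⟨hmem, hv1, hne⟩ := hp
    have h1 : p.1 ∈ V := (Finset.mem_product.1 hmem).1
    have hlt := stmt15_re_lt (hV p.1 h1) hv1 hne
    have hd : (0:ℝ) < ‖p.1 - p.2‖ := by
      rw [norm_pos_iff]; exact sub_ne_zero.2 hne
    exact div_pos (by linarith) hd
  by_cases hSne : S.Nonempty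
  · refine ⟨min 1 (S.inf' hSne f), ?_, min_le_left _ _, ?_⟩
    · apply lt_min one_pos
      rw [Finset.lt_inf'_iff]
      exact hfpos
    · intro v hv hv1 u hu
      by_cases hne : u = v
      · subst hne
        have : (u * (starRingEnd ℂ) u).re = 1 := by
          rw [Complex.mul_conj]
          have : Complex.normSq u = 1 := by
            rw [Complex.normSq_eq_norm_sq, hv1]; norm_num
          rw [this]; simp
        simp [this]
      · have hpS : (u, v) ∈ S := by
          rw [hS, Finset.mem_filter]
          exact ⟨Finset.mem_product.2 ⟨hu, hv⟩, hv1, hne⟩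
        have hle : min 1 (S.inf' hSne f) ≤ f (u, v) :=
          le_trans (min_le_right _ _) (Finset.inf'_le f hpS)
        have hd : (0:ℝ) < ‖u - v‖ := by
          rw [norm_pos_iff]; exact sub_ne_zero.2 hne
        calc min 1 (S.inf' hSne f) * ‖u - v‖ ≤ f (u, v) * ‖u - v‖ :=
          mul_le_mul_of_nonneg_right hle hd.le
        _ = 1 - (u * (starRingEnd ℂ) v).re := by
            rw [hf]; exact div_mul_cancel₀ _ hd.ne'
  · refine ⟨1, one_pos, le_refl _, ?_⟩
    intro v hv hv1 u hu
    by_cases hne : u = v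
    · subst hne
      have : (u * (starRingEnd ℂ) u).re = 1 := by
        rw [Complex.mul_conj]
        have : Complex.normSq u = 1 := by
          rw [Complex.normSq_eq_norm_sq, hv1]; norm_num
        rw [this]; simp
      simp [this]
    · refine absurd (⟨(u,v), ?_⟩ : S.Nonempty) hSne
      rw [hS, Finset.mem_filter]
      exact ⟨Finset.mem_product.2 ⟨hu, hv⟩, hv1, hne⟩

lemma stmt15_geom (V : Finset ℂ) (hV : ∀ v ∈ V, ‖v‖ ≤ 1) :
    ∃ M : ℝ, 1 ≤ M ∧ ∃ ε0 : ℝ, 0 < ε0 ∧ ε0 ≤ 1/2 ∧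
      ∀ w ∈ convexHull ℝ (V : Set ℂ), 1 - ‖w‖ ≤ ε0 →
        ∃ v ∈ V, ‖v‖ = 1 ∧ ‖w - v‖ ≤ M * (1 - ‖w‖) := by
  classical
  obtain ⟨c, hc0, hc1, hcineq⟩ := stmt15_c_exists V hV
  set K := convexHull ℝ (V : Set ℂ) with hK
  have hball : K ⊆ Metric.closedBall 0 1 := by
    apply convexHull_min _ (convex_closedBall _ _)
    intro v hv
    rw [Metric.mem_closedBall, dist_zero_right]
    exact hV v hv
  have hKcomp : IsCompact K := (V.finite_toSet.isCompact_convexHull ℝ)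
  set T := {w ∈ K | ∀ v ∈ V, ‖v‖ = 1 → c ≤ ‖w - v‖} with hT
  have hTclosed : IsClosed T := by
    have : T = K ∩ ⋂ (v : ℂ) (_ : v ∈ V) (_ : ‖v‖ = 1), {w : ℂ | c ≤ ‖w - v‖} := by
      ext w
      simp only [hT, Set.mem_setOf_eq, Set.mem_inter_iff, Set.mem_iInter, Set.mem_sep_iff]
    rw [this]
    refine hKcomp.isClosed.inter ?_
    refine isClosed_iInter fun v => isClosed_iInter fun _ => isClosed_iInter fun _ => ?_
    exact isClosed_le continuous_const ((continuous_id.sub continuous_const).norm)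
  have hTcomp : IsCompact T := hKcomp.of_isClosed_subset hTclosed (fun w hw => hw.1)
  have hnear : ∃ ε0 : ℝ, 0 < ε0 ∧ ε0 ≤ 1/2 ∧
      ∀ w ∈ K, 1 - ‖w‖ ≤ ε0 → ∃ v ∈ V, ‖v‖ = 1 ∧ ‖w - v‖ ≤ c := by
    by_cases hTne : T.Nonempty
    · obtain ⟨x0, hx0T, hmax⟩ := hTcomp.exists_isMaxOn hTne continuous_norm.continuousOn
      have hm1 : ‖x0‖ < 1 := by
        rcases lt_or_eq_of_le (by
          have := hball hx0T.1
          rwa [Metric.mem_closedBall, dist_zero_right] at this) with h | h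
        · exact h
        · exfalso
          have hx0V : x0 ∈ V := stmt15_extreme V hV h hx0T.1
          have := hx0T.2 x0 hx0V h
          simp at this
          linarith
      refine ⟨min (1/2) ((1 - ‖x0‖)/2), ?_, min_le_left _ _, ?_⟩
      · apply lt_min (by norm_num); linarith
      · intro w hw hwnear
        have hwT : w ∉ T := by
          intro hwT
          have : ‖w‖ ≤ ‖x0‖ := hmax hwT
          have h2 : min (1/2) ((1 - ‖x0‖)/2) ≤ (1 - ‖x0‖)/2 := min_le_right _ _
          linarith
        rw [hT, Set.mem_sep_iff] at hwT
        push_neg at hwT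
        obtain ⟨v, hv, hv1, hvlt⟩ := hwT hw
        exact ⟨v, hv, hv1, hvlt.le⟩
    · refine ⟨1/2, by norm_num, le_refl _, ?_⟩
      intro w hw _
      have hwT : w ∉ T := fun h => hTne ⟨w, h⟩
      rw [hT, Set.mem_sep_iff] at hwT
      push_neg at hwT
      obtain ⟨v, hv, hv1, hvlt⟩ := hwT hw
      exact ⟨v, hv, hv1, hvlt.le⟩
  obtain ⟨ε0, hε0pos, hε0le, hε0⟩ := hnear
  refine ⟨max 1 (2/c), le_max_left _ _, ε0, hε0pos, hε0le, ?_⟩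
  intro w hw hwnear
  obtain ⟨v, hv, hv1, hvc⟩ := hε0 w hw hwnear
  refine ⟨v, hv, hv1, ?_⟩
  have hkey := stmt15_hull_ineq V v c hc0.le (hcineq v hv hv1) w hw
  have hid := stmt15_normSq_sub' w v hv1
  have hwle : ‖w‖ ≤ 1 := by
    have := hball hw; rwa [Metric.mem_closedBall, dist_zero_right] at this
  have hw0 : (0:ℝ) ≤ ‖w‖ := norm_nonneg _
  have hsq : ‖w - v‖^2 / 2 ≤ c * ‖w - v‖ / 2 := by
    nlinarith [norm_nonneg (w - v)]
  have hhalf : c / 2 * ‖w - v‖ ≤ 1 - ‖w‖ := by nlinarith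
  calc ‖w - v‖ = (2/c) * (c/2 * ‖w - v‖) := by field_simp
  _ ≤ (2/c) * (1 - ‖w‖) := by
      apply mul_le_mul_of_nonneg_left hhalf; positivity
  _ ≤ max 1 (2/c) * (1 - ‖w‖) := by
      apply mul_le_mul_of_nonneg_right (le_max_right _ _); linarith

set_option maxHeartbeats 2000000 in
/-- If `φ` is a holomorphic self-map of `𝔻` whose image lies in a closed polygon inscribed in
the closed unit disc, and `C_φ` is bounded on `D_α` (`0 < α ≤ 1`) in the sense of the Carleson
box condition `μ_{φ,α}(W(ξ,h)) = O(h^{2+α})` for the weighted counting measure `N dA`, then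
`∫_𝔻 |φ'(z)|²/(1-|φ(z)|²)² dA_α(z) < ∞`. -/
theorem stmt15 (α : ℝ) (hα : α ∈ Set.Ioc (0:ℝ) 1) (φ : ℂ → ℂ)
    (hφ : DifferentiableOn ℂ φ (Metric.ball (0:ℂ) 1))
    (hφself : ∀ z ∈ Metric.ball (0:ℂ) 1, φ z ∈ Metric.ball (0:ℂ) 1)
    (N : ℂ → ENNReal) (hNmeas : Measurable N)
    -- `N = N_{φ,α}` via the change-of-variables identity
    (hchg : ∀ g : ℂ → ENNReal, Measurable g →
      (∫⁻ z in Metric.ball (0:ℂ) 1,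
          g (φ z) * ENNReal.ofReal (‖deriv φ z‖^2 * (1 - ‖z‖^2) ^ α))
        = ∫⁻ w in Metric.ball (0:ℂ) 1, g w * N w)
    -- Carleson box condition (boundedness of `C_φ` on `D_α`)
    (hcar : ∃ C : ℝ, 0 < C ∧ ∀ ξ : ℂ, ‖ξ‖ = 1 → ∀ h ∈ Set.Ioo (0:ℝ) 1,
      (∫⁻ w in {z : ℂ | ‖z‖ < 1 ∧ 1 - h ≤ ‖z‖ ∧
          |Complex.arg (z * (starRingEnd ℂ) ξ)| ≤ h}, N w)
        ≤ ENNReal.ofReal (C * h ^ (2 + α)))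
    -- the image of `φ` is contained in a polygon inscribed in the closed unit disc
    (hpoly : ∃ V : Finset ℂ, (∀ v ∈ V, ‖v‖ ≤ 1) ∧
      ∀ z ∈ Metric.ball (0:ℂ) 1, φ z ∈ convexHull ℝ (V : Set ℂ)) :
    (∫⁻ z in Metric.ball (0:ℂ) 1,
        ENNReal.ofReal (‖deriv φ z‖^2 / (1 - ‖φ z‖^2)^2 *
          ((1 + α) * (1 - ‖z‖^2) ^ α / π))) < ⊤ := by
  classical
  obtain ⟨hα0, hα1⟩ := hα
  obtain ⟨C, hCpos, hcar⟩ := hcar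
  obtain ⟨V, hV, hVφ⟩ := hpoly
  have hπpos : (0:ℝ) < π := Real.pi_pos
  set B : Set ℂ := Metric.ball (0:ℂ) 1 with hB
  set K : Set ℂ := convexHull ℝ (V : Set ℂ) with hKdef
  set g : ℂ → ENNReal := fun w => ENNReal.ofReal ((1 + α) / π / (1 - ‖w‖^2)^2) with hgdef
  have hgmeas : Measurable g := by
    apply Measurable.ennreal_ofReal
    exact measurable_const.div ((measurable_const.sub (measurable_norm.pow_const 2)).pow_const 2)
  have hrw : (∫⁻ z in B,
        ENNReal.ofReal (‖deriv φ z‖^2 / (1 - ‖φ z‖^2)^2 *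
          ((1 + α) * (1 - ‖z‖^2) ^ α / π)))
      = ∫⁻ z in B, g (φ z) * ENNReal.ofReal (‖deriv φ z‖^2 * (1 - ‖z‖^2) ^ α) := by
    refine setLIntegral_congr_fun measurableSet_ball ?_
    intro z hz
    have hz1 : ‖φ z‖ < 1 := by
      have := hφself z hz; rwa [mem_ball_zero_iff] at this
    have h0 : (0:ℝ) < 1 - ‖φ z‖^2 := by nlinarith [norm_nonneg (φ z)]
    have hpos : (0:ℝ) < (1 - ‖φ z‖^2)^2 := pow_pos h0 2
    rw [hgdef]
    beta_reduce
    rw [← ENNReal.ofReal_mul (by positivity)]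
    congr 1
    field_simp
  rw [hrw, hchg g hgmeas]
  -- measures
  set μ : Measure ℂ := (volume.restrict B).withDensity (fun w => g w * N w) with hμdef
  set ν : Measure ℂ := (volume.restrict B).withDensity N with hνdef
  have hμuniv : (∫⁻ w in B, g w * N w) = μ Set.univ := by
    rw [hμdef, withDensity_apply _ MeasurableSet.univ, Measure.restrict_univ]
  rw [hμuniv]
  have hKclosed : IsClosed K := ((V.finite_toSet.isCompact_convexHull ℝ)).isClosed
  have hKmeas : MeasurableSet K := hKclosed.measurableSet
  have hBmeas : MeasurableSet B := measurableSet_ball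
  -- absolute continuity facts
  have hBc0 : (volume.restrict B) Bᶜ = 0 := by
    rw [Measure.restrict_apply hBmeas.compl]
    simp
  have hμBc : μ Bᶜ = 0 := withDensity_absolutelyContinuous _ _ hBc0
  have hνBc : ν Bᶜ = 0 := withDensity_absolutelyContinuous _ _ hBc0
  -- Carleson bound for ν
  have hcarl : ∀ ξ : ℂ, ‖ξ‖ = 1 → ∀ h : ℝ, h ∈ Set.Ioo (0:ℝ) 1 →
      ν {z : ℂ | ‖z‖ < 1 ∧ 1 - h ≤ ‖z‖ ∧ |Complex.arg (z * (starRingEnd ℂ) ξ)| ≤ h}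
        ≤ ENNReal.ofReal (C * h ^ (2+α)) := by
    intro ξ hξ h hh
    have h1 : MeasurableSet {z : ℂ | ‖z‖ < 1} := measurableSet_lt measurable_norm measurable_const
    have h2 : MeasurableSet {z : ℂ | 1 - h ≤ ‖z‖} := measurableSet_le measurable_const measurable_norm
    have h3 : MeasurableSet {z : ℂ | |Complex.arg (z * (starRingEnd ℂ) ξ)| ≤ h} := by
      apply measurableSet_le _ measurable_const
      exact (Complex.measurable_arg.comp (measurable_mul_const ((starRingEnd ℂ) ξ))).abs
    have heq : {z : ℂ | ‖z‖ < 1 ∧ 1 - h ≤ ‖z‖ ∧ |Complex.arg (z * (starRingEnd ℂ) ξ)| ≤ h}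
        = {z : ℂ | ‖z‖ < 1} ∩ ({z : ℂ | 1 - h ≤ ‖z‖} ∩
            {z : ℂ | |Complex.arg (z * (starRingEnd ℂ) ξ)| ≤ h}) := rfl
    have hmeasS : MeasurableSet {z : ℂ | ‖z‖ < 1 ∧ 1 - h ≤ ‖z‖ ∧
        |Complex.arg (z * (starRingEnd ℂ) ξ)| ≤ h} := by
      rw [heq]; exact h1.inter (h2.inter h3)
    calc ν {z : ℂ | ‖z‖ < 1 ∧ 1 - h ≤ ‖z‖ ∧ |Complex.arg (z * (starRingEnd ℂ) ξ)| ≤ h}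
        = ∫⁻ w in {z : ℂ | ‖z‖ < 1 ∧ 1 - h ≤ ‖z‖ ∧
            |Complex.arg (z * (starRingEnd ℂ) ξ)| ≤ h}, N w ∂(volume.restrict B) :=
          withDensity_apply _ hmeasS
    _ = ∫⁻ w in ({z : ℂ | ‖z‖ < 1 ∧ 1 - h ≤ ‖z‖ ∧
            |Complex.arg (z * (starRingEnd ℂ) ξ)| ≤ h} ∩ B), N w := by
          rw [Measure.restrict_restrict hmeasS]
    _ ≤ ∫⁻ w in {z : ℂ | ‖z‖ < 1 ∧ 1 - h ≤ ‖z‖ ∧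
            |Complex.arg (z * (starRingEnd ℂ) ξ)| ≤ h}, N w :=
          lintegral_mono_set Set.inter_subset_left
    _ ≤ ENNReal.ofReal (C * h ^ (2+α)) := hcar ξ hξ h hh
  -- total mass of ν
  have hνuniv : ν Set.univ ≤ 13 * ENNReal.ofReal C := by
    set A : ℕ → Set ℂ := fun k => {w : ℂ | (1/2:ℝ)^(k+1) ≤ ‖w‖ ∧ ‖w‖ < 1} with hA
    have hAmono : Monotone A := by
      intro i j hij w hw
      exact ⟨le_trans (pow_le_pow_of_le_one (by norm_num) (by norm_num) (by omega)) hw.1, hw.2⟩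
    have hν0 : ν ({(0:ℂ)} : Set ℂ) = 0 := by
      apply withDensity_absolutelyContinuous _ _
      have h1 : (volume.restrict B) {(0:ℂ)} ≤ volume {(0:ℂ)} := Measure.restrict_le_self _
      have h2 : volume ({(0:ℂ)} : Set ℂ) = 0 := measure_singleton 0
      exact le_antisymm (h2 ▸ h1) (by positivity)
    have hcover : Set.univ ⊆ Bᶜ ∪ ({(0:ℂ)} ∪ ⋃ k, A k) := by
      intro w _
      by_cases hwB : w ∈ B
      · by_cases hw0 : w = 0
        · exact Or.inr (Or.inl (by simp [hw0]))
        · have hw1 : ‖w‖ < 1 := by rwa [hB, mem_ball_zero_iff] at hwB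
          have hwpos : 0 < ‖w‖ := norm_pos_iff.2 hw0
          obtain ⟨k, hk⟩ := exists_pow_lt_of_lt_one hwpos (by norm_num : (1/2:ℝ) < 1)
          refine Or.inr (Or.inr (Set.mem_iUnion.2 ⟨k, ?_, hw1⟩))
          exact le_of_lt (lt_of_le_of_lt
            (pow_le_pow_of_le_one (by norm_num) (by norm_num) (Nat.le_succ k)) hk)
      · exact Or.inl hwB
    have hAk : ∀ k, ν (A k) ≤ 13 * ENNReal.ofReal C := by
      intro k
      set h : ℝ := 1 - (1/2:ℝ)^(k+1) with hh
      have hpk : (0:ℝ) < (1/2:ℝ)^(k+1) := by positivity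
      have hpk1 : (1/2:ℝ)^(k+1) ≤ 1/2 := by
        calc (1/2:ℝ)^(k+1) ≤ (1/2:ℝ)^1 :=
          pow_le_pow_of_le_one (by norm_num) (by norm_num) (by omega)
        _ = 1/2 := pow_one _
      have hhIoo : h ∈ Set.Ioo (0:ℝ) 1 := ⟨by rw [hh]; linarith, by rw [hh]; linarith⟩
      have hh2 : (1/2:ℝ) ≤ h := by rw [hh]; linarith
      have hsub : A k ⊆ ⋃ j ∈ Finset.range 13, {z : ℂ | ‖z‖ < 1 ∧ 1 - h ≤ ‖z‖ ∧
          |Complex.arg (z * (starRingEnd ℂ)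
            (Complex.exp ((((-π + (j:ℝ)/2 : ℝ)) : ℂ) * Complex.I)))| ≤ h} := by
        intro w hw
        obtain ⟨hw1, hw2⟩ := hw
        have hw0 : w ≠ 0 := by
          intro h0
          rw [h0] at hw1; simp at hw1
          have h2p : (0:ℝ) < 2^(k+1) := by positivity
          linarith
        obtain ⟨j, hj13, hjarg⟩ := stmt15_cover w hw0
        refine Set.mem_biUnion (Finset.mem_range.2 hj13) ?_
        refine ⟨hw2, ?_, le_trans hjarg hh2⟩
        rw [hh]; simpa using hw1
      calc ν (A k) ≤ ν (⋃ j ∈ Finset.range 13, {z : ℂ | ‖z‖ < 1 ∧ 1 - h ≤ ‖z‖ ∧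
          |Complex.arg (z * (starRingEnd ℂ)
            (Complex.exp ((((-π + (j:ℝ)/2 : ℝ)) : ℂ) * Complex.I)))| ≤ h}) := measure_mono hsub
      _ ≤ ∑ j ∈ Finset.range 13, ν {z : ℂ | ‖z‖ < 1 ∧ 1 - h ≤ ‖z‖ ∧
          |Complex.arg (z * (starRingEnd ℂ)
            (Complex.exp ((((-π + (j:ℝ)/2 : ℝ)) : ℂ) * Complex.I)))| ≤ h} :=
            measure_biUnion_finset_le _ _
      _ ≤ ∑ _j ∈ Finset.range 13, ENNReal.ofReal C := by
          apply Finset.sum_le_sum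
          intro j _
          refine le_trans (hcarl _ ?_ h hhIoo) (ENNReal.ofReal_le_ofReal ?_)
          · rw [Complex.norm_exp_ofReal_mul_I]
          · have hle1 : h ^ (2+α) ≤ 1 :=
              Real.rpow_le_one hhIoo.1.le hhIoo.2.le (by linarith)
            nlinarith
      _ = 13 * ENNReal.ofReal C := by
          rw [Finset.sum_const, Finset.card_range, nsmul_eq_mul]
          norm_num
    calc ν Set.univ ≤ ν (Bᶜ ∪ ({(0:ℂ)} ∪ ⋃ k, A k)) := measure_mono hcover
    _ ≤ ν Bᶜ + ν ({(0:ℂ)} ∪ ⋃ k, A k) := measure_union_le _ _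
    _ ≤ ν Bᶜ + (ν {(0:ℂ)} + ν (⋃ k, A k)) := add_le_add_right (measure_union_le _ _) _
    _ = ν (⋃ k, A k) := by rw [hνBc, hν0]; simp
    _ = ⨆ k, ν (A k) := (hAmono.directed_le).measure_iUnion
    _ ≤ 13 * ENNReal.ofReal C := iSup_le hAk
  -- geometry of the polygon
  obtain ⟨M, hM1, ε0, hε0pos, hε0le, hgeom⟩ := stmt15_geom V hV
  set M' : ℝ := π * M with hM'
  have hπ3 : (3:ℝ) < π := Real.pi_gt_three
  have hM'1 : 1 ≤ M' := by nlinarith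
  obtain ⟨n1, hn1⟩ := exists_pow_lt_of_lt_one
    (show (0:ℝ) < min ε0 (1/M') from lt_min hε0pos (by positivity))
    (show (1/2:ℝ) < 1 by norm_num)
  have hn1ε : (1/2:ℝ)^n1 ≤ ε0 := le_of_lt (lt_of_lt_of_le hn1 (min_le_left _ _))
  have hn1M : M' * (1/2:ℝ)^n1 < 1 := by
    have h2 : (1/2:ℝ)^n1 < 1/M' := lt_of_lt_of_le hn1 (min_le_right _ _)
    have hM'0 : (0:ℝ) < M' := by linarith
    calc M' * (1/2:ℝ)^n1 < M' * (1/M') := by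
          exact mul_lt_mul_of_pos_left h2 hM'0
    _ = 1 := by field_simp
  -- dyadic decomposition sets
  set E : ℕ → Set ℂ := fun n =>
    {w : ℂ | 1 - (1/2:ℝ)^n ≤ ‖w‖ ∧ ‖w‖ < 1 - (1/2:ℝ)^(n+1)} ∩ K with hE
  set S0 : Set ℂ := {w : ℂ | ‖w‖ < 1 - (1/2:ℝ)^n1} with hS0
  have hEmeas : ∀ n, MeasurableSet (E n) := fun n =>
    ((measurableSet_le measurable_const measurable_norm).inter
      (measurableSet_lt measurable_norm measurable_const)).inter hKmeas
  have hS0meas : MeasurableSet S0 := measurableSet_lt measurable_norm measurable_const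
  -- covering of the whole space
  have hcover2 : Set.univ ⊆ Bᶜ ∪ (S0 ∪ (Kᶜ ∪ ⋃ k, E (n1 + k))) := by
    intro w _
    by_cases hwB : w ∈ B
    swap
    · exact Or.inl hwB
    by_cases hwK : w ∈ K
    swap
    · exact Or.inr (Or.inr (Or.inl hwK))
    by_cases hwS : ‖w‖ < 1 - (1/2:ℝ)^n1
    · exact Or.inr (Or.inl hwS)
    push_neg at hwS
    have hw1 : ‖w‖ < 1 := by rwa [hB, mem_ball_zero_iff] at hwB
    set t : ℝ := 1 - ‖w‖ with htdef
    have ht0 : 0 < t := by rw [htdef]; linarith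
    have htn1 : t ≤ (1/2:ℝ)^n1 := by rw [htdef]; linarith
    have hPex : ∃ m : ℕ, (1/2:ℝ)^(m+1) < t := by
      obtain ⟨m, hm⟩ := exists_pow_lt_of_lt_one ht0 (show (1/2:ℝ) < 1 by norm_num)
      exact ⟨m, lt_of_le_of_lt
        (pow_le_pow_of_le_one (by norm_num) (by norm_num) (Nat.le_succ m)) hm⟩
    set m := Nat.find hPex with hmdef
    have hm1 : (1/2:ℝ)^(m+1) < t := Nat.find_spec hPex
    have hm2 : t ≤ (1/2:ℝ)^m := by
      rcases Nat.eq_zero_or_pos m with h0 | hpos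
    -- m = 0 case
      · rw [h0, pow_zero]
        calc t ≤ (1/2:ℝ)^n1 := htn1
        _ ≤ 1 := pow_le_one₀ (by norm_num) (by norm_num)
      · obtain ⟨j, hj⟩ := Nat.exists_eq_add_of_lt hpos
        have hnot := Nat.find_min hPex (m := j) (by omega)
        push_neg at hnot
        have : j + 1 = m := by omega
        rwa [this] at hnot
    have hmn1 : n1 ≤ m := by
      by_contra hcon
      push_neg at hcon
      have : (1/2:ℝ)^n1 ≤ (1/2:ℝ)^(m+1) :=
        pow_le_pow_of_le_one (by norm_num) (by norm_num) (by omega)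
      linarith
    refine Or.inr (Or.inr (Or.inr (Set.mem_iUnion.2 ⟨m - n1, ?_⟩)))
    have hmm : n1 + (m - n1) = m := by omega
    rw [hE, hmm]
    refine ⟨⟨?_, ?_⟩, hwK⟩
    · rw [htdef] at hm2; linarith
    · rw [htdef] at hm1; linarith
  -- μ vanishes outside K
  have hμKc : μ Kᶜ = 0 := by
    have hindmeas : Measurable (Kᶜ.indicator (fun _ : ℂ => (1:ENNReal))) :=
      measurable_const.indicator hKmeas.compl
    have hind : (∫⁻ w in B, (Kᶜ.indicator (fun _ : ℂ => (1:ENNReal)) w) * N w) = 0 := by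
      rw [← hchg _ hindmeas]
      have hz : ∀ᵐ z ∂volume, z ∈ B →
          (Kᶜ.indicator (fun _ : ℂ => (1:ENNReal)) (φ z))
            * ENNReal.ofReal (‖deriv φ z‖^2 * (1 - ‖z‖^2) ^ α) = 0 := by
        refine ae_of_all _ fun z hz => ?_
        have hφK : φ z ∈ K := hVφ z hz
        rw [Set.indicator_of_notMem (by simpa using hφK), zero_mul]
      rw [setLIntegral_congr_fun_ae measurableSet_ball hz]
      simp
    have heq2 : (∫⁻ w in B, Kᶜ.indicator N w) = 0 := by
      rw [← hind]
      refine lintegral_congr fun w => ?_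
      by_cases hw : w ∈ Kᶜ
      · rw [Set.indicator_of_mem hw, Set.indicator_of_mem hw, one_mul]
      · rw [Set.indicator_of_notMem hw, Set.indicator_of_notMem hw, zero_mul]
    have hae : Kᶜ.indicator N =ᵐ[volume.restrict B] 0 :=
      (lintegral_eq_zero_iff (hNmeas.indicator hKmeas.compl)).1 heq2
    rw [hμdef, withDensity_apply _ hKmeas.compl, ← lintegral_indicator hKmeas.compl]
    rw [lintegral_eq_zero_iff ((show Measurable (fun a => g a * N a) from hgmeas.mul hNmeas).indicator hKmeas.compl)]
    filter_upwards [hae] with w hw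
    by_cases hwK : w ∈ Kᶜ
    · have hN0 : N w = 0 := by simpa [Set.indicator_of_mem hwK] using hw
      simp [Set.indicator_of_mem hwK, hN0]
    · simp [Set.indicator_of_notMem hwK]
  -- bound for μ on S0
  have hgS0 : ∀ w ∈ S0, g w ≤ ENNReal.ofReal ((1+α)/π / ((1/2:ℝ)^n1)^2) := by
    intro w hw
    rw [hS0, Set.mem_setOf_eq] at hw
    rw [hgdef]
    apply ENNReal.ofReal_le_ofReal
    have hq : (0:ℝ) < (1/2:ℝ)^n1 := by positivity
    have hwn : (0:ℝ) ≤ ‖w‖ := norm_nonneg w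
    have hw1 : ‖w‖ < 1 := by nlinarith
    have h1 : (1/2:ℝ)^n1 < 1 - ‖w‖ := by linarith
    have h2 : 1 - ‖w‖ ≤ 1 - ‖w‖^2 := by nlinarith
    have h3 : ((1/2:ℝ)^n1)^2 ≤ (1 - ‖w‖^2)^2 := by nlinarith
    have ha : (0:ℝ) ≤ (1+α)/π := by positivity
    exact div_le_div_of_nonneg_left ha (by positivity) h3
  have hμS0 : μ S0 ≤ ENNReal.ofReal ((1+α)/π / ((1/2:ℝ)^n1)^2) * (13 * ENNReal.ofReal C) := by
    rw [hμdef, withDensity_apply _ hS0meas]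
    calc (∫⁻ w in S0, g w * N w ∂(volume.restrict B))
        ≤ ∫⁻ w in S0, (ENNReal.ofReal ((1+α)/π / ((1/2:ℝ)^n1)^2)) * N w ∂(volume.restrict B) :=
          setLIntegral_mono (hNmeas.const_mul _) fun w hw => mul_le_mul_left (hgS0 w hw) _
    _ = ENNReal.ofReal ((1+α)/π / ((1/2:ℝ)^n1)^2)
          * ∫⁻ w in S0, N w ∂(volume.restrict B) := lintegral_const_mul _ hNmeas
    _ ≤ ENNReal.ofReal ((1+α)/π / ((1/2:ℝ)^n1)^2) * (13 * ENNReal.ofReal C) := by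
        apply mul_le_mul_right
        calc (∫⁻ w in S0, N w ∂(volume.restrict B)) = ν S0 :=
          (withDensity_apply _ hS0meas).symm
        _ ≤ ν Set.univ := measure_mono (Set.subset_univ _)
        _ ≤ 13 * ENNReal.ofReal C := hνuniv
  -- bound for μ on E n
  set V1 : Finset ℂ := V.filter (fun v => ‖v‖ = 1) with hV1
  have hM'0 : (0:ℝ) < M' := by linarith
  have hgE : ∀ n, ∀ w ∈ E n, g w ≤ ENNReal.ofReal ((1+α)/π * 4^(n+1)) := by
    intro n w hw
    obtain ⟨⟨hw1, hw2⟩, hwK⟩ := hw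
    have hq : (0:ℝ) < (1/2:ℝ)^(n+1) := by positivity
    have hwn : (0:ℝ) ≤ ‖w‖ := norm_nonneg w
    have hwlt1 : ‖w‖ < 1 := by nlinarith
    have h1 : (1/2:ℝ)^(n+1) < 1 - ‖w‖ := by linarith
    have h2 : 1 - ‖w‖ ≤ 1 - ‖w‖^2 := by nlinarith
    have h3 : ((1/2:ℝ)^(n+1))^2 ≤ (1 - ‖w‖^2)^2 := by nlinarith
    rw [hgdef]
    apply ENNReal.ofReal_le_ofReal
    have hstep : (1+α)/π / (1 - ‖w‖^2)^2 ≤ (1+α)/π / ((1/2:ℝ)^(n+1))^2 :=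
      div_le_div_of_nonneg_left (by positivity) (by positivity) h3
    have heq4 : (1+α)/π / ((1/2:ℝ)^(n+1))^2 = (1+α)/π * 4^(n+1) := by
      have hh : ((1/2:ℝ)^(n+1))^2 = ((4:ℝ)^(n+1))⁻¹ := by
        rw [pow_right_comm, ← inv_pow]
        norm_num
      rw [hh, div_eq_mul_inv, inv_inv]
    linarith [hstep, heq4 ▸ hstep]
  have hμE : ∀ n, n1 ≤ n → μ (E n) ≤ ENNReal.ofReal ((1+α)/π * 4^(n+1))
      * ((V1.card : ENNReal) * ENNReal.ofReal (C * (M' * (1/2:ℝ)^n)^(2+α))) := by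
    intro n hn
    have hpn : (0:ℝ) < (1/2:ℝ)^n := by positivity
    have hple : (1/2:ℝ)^n ≤ (1/2:ℝ)^n1 :=
      pow_le_pow_of_le_one (by norm_num) (by norm_num) hn
    have hhn : M' * (1/2:ℝ)^n ∈ Set.Ioo (0:ℝ) 1 := by
      constructor
      · positivity
      · calc M' * (1/2:ℝ)^n ≤ M' * (1/2:ℝ)^n1 := by
              exact mul_le_mul_of_nonneg_left hple hM'0.le
        _ < 1 := hn1M
    have hsubE : E n ⊆ ⋃ v ∈ V1, {z : ℂ | ‖z‖ < 1 ∧ 1 - M' * (1/2:ℝ)^n ≤ ‖z‖ ∧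
        |Complex.arg (z * (starRingEnd ℂ) v)| ≤ M' * (1/2:ℝ)^n} := by
      intro w hw
      obtain ⟨⟨hw1, hw2⟩, hwK⟩ := hw
      have hq : (0:ℝ) < (1/2:ℝ)^(n+1) := by positivity
      have hwn : (0:ℝ) ≤ ‖w‖ := norm_nonneg w
      have hwlt1 : ‖w‖ < 1 := by nlinarith
      have ht : 1 - ‖w‖ ≤ (1/2:ℝ)^n := by linarith
      have htε : 1 - ‖w‖ ≤ ε0 := le_trans ht (le_trans hple hn1ε)
      obtain ⟨v, hvV, hv1, hvd⟩ := hgeom w hwK htε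
      have hM0 : (0:ℝ) < M := by linarith
      have hwv : ‖w - v‖ ≤ M * (1/2:ℝ)^n :=
        le_trans hvd (mul_le_mul_of_nonneg_left ht hM0.le)
      have hwvπ : ‖w - v‖ ≤ 1/π := by
        have h1 : M * (1/2:ℝ)^n ≤ M * (1/2:ℝ)^n1 :=
          mul_le_mul_of_nonneg_left hple hM0.le
        have h2 : M * (1/2:ℝ)^n1 * π < 1 := by
          have : π * M * (1/2:ℝ)^n1 < 1 := by rw [← hM']; exact hn1M
          nlinarith
        have h3 : M * (1/2:ℝ)^n1 ≤ 1/π := by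
          rw [le_div_iff₀ hπpos]
          linarith
        linarith
      have harg := stmt15_arg_le hv1 hwvπ
      refine Set.mem_biUnion (by rw [hV1]; exact Finset.mem_filter.2 ⟨hvV, hv1⟩) ?_
      refine ⟨hwlt1, ?_, ?_⟩
      · have hle : 1 - ‖w‖ ≤ M' * (1/2:ℝ)^n := by
          calc 1 - ‖w‖ ≤ (1/2:ℝ)^n := ht
          _ ≤ M' * (1/2:ℝ)^n := le_mul_of_one_le_left hpn.le hM'1
        linarith
      · calc |Complex.arg (w * (starRingEnd ℂ) v)| ≤ π * ‖w - v‖ := harg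
        _ ≤ π * (M * (1/2:ℝ)^n) := mul_le_mul_of_nonneg_left hwv hπpos.le
        _ = M' * (1/2:ℝ)^n := by rw [hM']; ring
    rw [hμdef, withDensity_apply _ (hEmeas n)]
    calc (∫⁻ w in E n, g w * N w ∂(volume.restrict B))
        ≤ ∫⁻ w in E n, (ENNReal.ofReal ((1+α)/π * 4^(n+1))) * N w ∂(volume.restrict B) :=
          setLIntegral_mono (hNmeas.const_mul _) fun w hw => mul_le_mul_left (hgE n w hw) _
    _ = ENNReal.ofReal ((1+α)/π * 4^(n+1))
          * ∫⁻ w in E n, N w ∂(volume.restrict B) := lintegral_const_mul _ hNmeas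
    _ ≤ ENNReal.ofReal ((1+α)/π * 4^(n+1))
          * ((V1.card : ENNReal) * ENNReal.ofReal (C * (M' * (1/2:ℝ)^n)^(2+α))) := by
        apply mul_le_mul_right
        calc (∫⁻ w in E n, N w ∂(volume.restrict B)) = ν (E n) :=
          (withDensity_apply _ (hEmeas n)).symm
        _ ≤ ν (⋃ v ∈ V1, {z : ℂ | ‖z‖ < 1 ∧ 1 - M' * (1/2:ℝ)^n ≤ ‖z‖ ∧
            |Complex.arg (z * (starRingEnd ℂ) v)| ≤ M' * (1/2:ℝ)^n}) := measure_mono hsubE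
        _ ≤ ∑ v ∈ V1, ν {z : ℂ | ‖z‖ < 1 ∧ 1 - M' * (1/2:ℝ)^n ≤ ‖z‖ ∧
            |Complex.arg (z * (starRingEnd ℂ) v)| ≤ M' * (1/2:ℝ)^n} :=
              measure_biUnion_finset_le _ _
        _ ≤ ∑ _v ∈ V1, ENNReal.ofReal (C * (M' * (1/2:ℝ)^n)^(2+α)) := by
            apply Finset.sum_le_sum
            intro v hv
            exact hcarl v (Finset.mem_filter.1 hv).2 _ hhn
        _ = (V1.card : ENNReal) * ENNReal.ofReal (C * (M' * (1/2:ℝ)^n)^(2+α)) := by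
            rw [Finset.sum_const, nsmul_eq_mul]
  -- numeric identity
  set D : ℝ := (1+α)/π * 4 * (C * M'^(2+α)) with hD
  have hDpos : 0 < D := by
    rw [hD]
    have : (0:ℝ) < M'^(2+α) := Real.rpow_pos_of_pos hM'0 _
    positivity
  have hreal : ∀ n : ℕ, (1+α)/π * 4^(n+1) * (C * (M' * (1/2:ℝ)^n)^(2+α))
      = D * ((1/2:ℝ)^α)^n := by
    intro n
    have hx : (0:ℝ) < (1/2:ℝ)^n := by positivity
    have hpowα : ((1/2:ℝ)^n)^α = ((1/2:ℝ)^α)^n := by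
      have h1 : ((1/2:ℝ)^n)^α = (1/2:ℝ)^((n:ℝ)*α) := by
        rw [← Real.rpow_natCast (1/2:ℝ) n, ← Real.rpow_mul (by norm_num)]
      have h2 : ((1/2:ℝ)^α)^n = (1/2:ℝ)^(α*(n:ℝ)) := by
        rw [← Real.rpow_natCast ((1/2:ℝ)^α) n, ← Real.rpow_mul (by norm_num)]
      rw [h1, h2, mul_comm]
    have hkey : (M' * (1/2:ℝ)^n)^(2+α)
        = M'^(2+α) * (((1/2:ℝ)^n)^2 * ((1/2:ℝ)^α)^n) := by
      rw [Real.mul_rpow hM'0.le hx.le, Real.rpow_add hx, Real.rpow_two, hpowα]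
    have h4 : (4:ℝ)^(n+1) * ((1/2:ℝ)^n)^2 = 4 := by
      have hc : ((1/2:ℝ)^n)^2 = ((1/4:ℝ))^n := by
        rw [pow_right_comm]
        norm_num
      rw [hc, pow_succ]
      calc (4:ℝ)^n * 4 * (1/4:ℝ)^n = 4 * ((4:ℝ) * (1/4:ℝ))^n := by rw [mul_pow]; ring
      _ = 4 := by norm_num
    calc (1+α)/π * 4^(n+1) * (C * (M' * (1/2:ℝ)^n)^(2+α))
        = ((4:ℝ)^(n+1) * ((1/2:ℝ)^n)^2) * ((1+α)/π * (C * M'^(2+α)) * ((1/2:ℝ)^α)^n) := by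
          rw [hkey]; ring
    _ = 4 * ((1+α)/π * (C * M'^(2+α)) * ((1/2:ℝ)^α)^n) := by rw [h4]
    _ = D * ((1/2:ℝ)^α)^n := by rw [hD]; ring
  -- summable bound
  set r : ℝ := (1/2:ℝ)^α with hr
  have hr0 : 0 ≤ r := by rw [hr]; positivity
  have hr1 : r < 1 := by
    rw [hr]
    exact Real.rpow_lt_one (by norm_num) (by norm_num) hα0
  set cardD : ℝ := (V1.card : ℝ) * D with hcardD
  have hterm : ∀ k : ℕ, μ (E (n1 + k)) ≤ ENNReal.ofReal cardD * (ENNReal.ofReal r)^k := by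
    intro k
    refine le_trans (hμE (n1+k) (Nat.le_add_right _ _)) ?_
    have hb : (0:ℝ) ≤ C * (M' * (1/2:ℝ)^(n1+k))^(2+α) := by
      have := Real.rpow_nonneg (show (0:ℝ) ≤ M' * (1/2:ℝ)^(n1+k) by positivity) (2+α)
      positivity
    have ha : (0:ℝ) ≤ (1+α)/π * 4^(n1+k+1) := by positivity
    have hcast : (V1.card : ENNReal) = ENNReal.ofReal (V1.card : ℝ) := by
      rw [ENNReal.ofReal_natCast]
    rw [hcast, ← ENNReal.ofReal_mul (by positivity), ← ENNReal.ofReal_mul ha]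
    rw [← ENNReal.ofReal_pow hr0, ← ENNReal.ofReal_mul (by rw [hcardD]; positivity)]
    apply ENNReal.ofReal_le_ofReal
    have hrn : r^(n1+k) = r^n1 * r^k := pow_add r n1 k
    have hrn1 : r^n1 ≤ 1 := pow_le_one₀ hr0 hr1.le
    calc (1+α)/π * 4^(n1+k+1) * ((V1.card : ℝ) * (C * (M' * (1/2:ℝ)^(n1+k))^(2+α)))
        = (V1.card : ℝ) * ((1+α)/π * 4^(n1+k+1) * (C * (M' * (1/2:ℝ)^(n1+k))^(2+α))) := by ring
    _ = (V1.card : ℝ) * (D * r^(n1+k)) := by rw [hreal (n1+k), hr]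
    _ = cardD * (r^n1 * r^k) := by rw [hcardD, hrn]; ring
    _ ≤ cardD * (1 * r^k) := by
        apply mul_le_mul_of_nonneg_left _ (by rw [hcardD]; positivity)
        apply mul_le_mul_of_nonneg_right hrn1 (by positivity)
    _ = cardD * r^k := by ring
  have hrE : ENNReal.ofReal r < 1 := ENNReal.ofReal_lt_one.2 hr1
  have hsumlt : (∑' k, μ (E (n1 + k))) < ⊤ := by
    have hb : (∑' k, μ (E (n1 + k)))
        ≤ ENNReal.ofReal cardD * (1 - ENNReal.ofReal r)⁻¹ := by
      calc (∑' k, μ (E (n1 + k)))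
          ≤ ∑' k, ENNReal.ofReal cardD * (ENNReal.ofReal r)^k := ENNReal.tsum_le_tsum hterm
      _ = ENNReal.ofReal cardD * ∑' k, (ENNReal.ofReal r)^k := ENNReal.tsum_mul_left
      _ = ENNReal.ofReal cardD * (1 - ENNReal.ofReal r)⁻¹ := by rw [ENNReal.tsum_geometric]
    refine lt_of_le_of_lt hb ?_
    apply ENNReal.mul_lt_top ENNReal.ofReal_lt_top
    rw [lt_top_iff_ne_top, Ne, ENNReal.inv_eq_top, tsub_eq_zero_iff_le]
    exact not_le.2 hrE
  -- final assembly
  have hμS0top : μ S0 < ⊤ :=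
    lt_of_le_of_lt hμS0 (ENNReal.mul_lt_top ENNReal.ofReal_lt_top
      (ENNReal.mul_lt_top (by norm_num) ENNReal.ofReal_lt_top))
  calc μ Set.univ ≤ μ (Bᶜ ∪ (S0 ∪ (Kᶜ ∪ ⋃ k, E (n1 + k)))) := measure_mono hcover2
  _ ≤ μ Bᶜ + (μ S0 + (μ Kᶜ + μ (⋃ k, E (n1 + k)))) :=
      le_trans (measure_union_le _ _) (add_le_add_right (le_trans (measure_union_le _ _)
        (add_le_add_right (measure_union_le _ _) _)) _)
  _ ≤ 0 + (μ S0 + (0 + ∑' k, μ (E (n1 + k)))) := by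
      rw [hμBc, hμKc]
      gcongr
      exact measure_iUnion_le _
  _ = μ S0 + ∑' k, μ (E (n1 + k)) := by rw [zero_add, zero_add]
  _ < ⊤ := ENNReal.add_lt_top.2 ⟨hμS0top, hsumlt⟩
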